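/- Let p ≥ 2 and w ≥ 1 be integers. The number of solutions (c_0,…,c_{p−1}) ∈ ℤ^p of the system c_j − c_{j−1} ≤ w−1 for 1 ≤ j ≤ p−1, c_0 − c_{p−1} ≤ w, and c_0 + ⋯ + c_{p−1} = 0, is equal to (1/p)·C(pw, p−1), provided p is prime. -/
import Mathlib
set_option linter.unusedSectionVars false

open Finset

section ScopesAux

variable (p w : ℕ) [NeZero p]

/-- Equivalence between `Fin p` and `ZMod p`. -/
def finZModEquiv : Fin p ≃ ZMod p where
  toFun i := ((i : ℕ) : ZMod p)
  invFun z := ⟨z.val, z.val_lt⟩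
  left_inv i := by ext; simp [ZMod.val_cast_of_lt i.isLt]
  right_inv z := ZMod.natCast_rightInverse z

lemma zmod_sum_range {M : Type*} [AddCommMonoid M] (f : ZMod p → M) :
    ∑ j : ZMod p, f j = ∑ k ∈ Finset.range p, f ((k : ℕ) : ZMod p) := by
  rw [← Fin.sum_univ_eq_sum_range]
  exact (Fintype.sum_equiv (finZModEquiv p) _ _ (fun i => rfl)).symm

end ScopesAux

section Scopes

variable (p w : ℕ) [NeZero p]

def scopesD (j : ZMod p) : ℤ := if j = 0 then (w : ℤ) else (w : ℤ) - 1

def scopesN : ℕ := p * (w - 1) + 1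

def scopesRes (e : ZMod p → ℕ) : ZMod p := ∑ j : ZMod p, j * (e j : ZMod p)

def scopesR₀ : ZMod p := (∑ j : ZMod p, j) * ((w : ZMod p) - 1)

variable (hw : 1 ≤ w)

lemma sum_scopesD (hw : 1 ≤ w) : ∑ j : ZMod p, scopesD p w j = (scopesN p w : ℤ) := by
  have : ∀ j : ZMod p, scopesD p w j = ((w : ℤ) - 1) + (if j = 0 then 1 else 0) := by
    intro j; unfold scopesD; split <;> ring
  rw [Finset.sum_congr rfl (fun j _ => this j)]
  rw [Finset.sum_add_distrib, Finset.sum_ite_eq' Finset.univ (0 : ZMod p) (fun _ => (1:ℤ))]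
  simp only [Finset.mem_univ, if_true, Finset.sum_const, Finset.card_univ, ZMod.card]
  unfold scopesN
  have : (w : ℤ) - 1 = ((w - 1 : ℕ) : ℤ) := by
    have := Nat.cast_sub (R := ℤ) hw; omega
  rw [this]; push_cast; ring

lemma sum_j_scopesD : ∑ j : ZMod p, j * ((scopesD p w j : ℤ) : ZMod p) = scopesR₀ p w := by
  have : ∀ j : ZMod p, j * ((scopesD p w j : ℤ) : ZMod p)
      = j * ((w : ZMod p) - 1) + (if j = 0 then j else 0) := by
    intro j; unfold scopesD; split
    · subst ‹j = 0›; push_cast; ring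
    · push_cast; ring
  rw [Finset.sum_congr rfl (fun j _ => this j), Finset.sum_add_distrib]
  rw [Finset.sum_ite_eq' Finset.univ (0 : ZMod p) (fun j => j)]
  simp only [Finset.mem_univ, if_true, add_zero, ← Finset.sum_mul, scopesR₀]

/-! ### From a constrained vector `c` to a composition `e` -/

def scopesE (c : ZMod p → ℤ) (j : ZMod p) : ℕ := (scopesD p w j - (c j - c (j - 1))).toNat

lemma scopesE_cast (c : ZMod p → ℤ) (h1 : ∀ j, c j - c (j - 1) ≤ scopesD p w j) (j : ZMod p) :
    ((scopesE p w c j : ℤ)) = scopesD p w j - (c j - c (j - 1)) :=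
  Int.toNat_of_nonneg (by linarith [h1 j])

lemma sum_shift_index (c : ZMod p → ℤ) : ∑ j : ZMod p, c (j - 1) = ∑ j : ZMod p, c j :=
  Fintype.sum_equiv (Equiv.subRight (1 : ZMod p)) _ _ (fun _ => rfl)

lemma sum_scopesE (c : ZMod p → ℤ) (h1 : ∀ j, c j - c (j - 1) ≤ scopesD p w j) (hw : 1 ≤ w) :
    ∑ j : ZMod p, scopesE p w c j = scopesN p w := by
  have : ((∑ j : ZMod p, scopesE p w c j : ℕ) : ℤ) = (scopesN p w : ℤ) := by
    push_cast
    rw [Finset.sum_congr rfl (fun j _ => scopesE_cast p w c h1 j)]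
    rw [Finset.sum_sub_distrib, Finset.sum_sub_distrib, sum_shift_index, sum_scopesD p w hw]
    ring
  exact_mod_cast this

lemma res_scopesE (c : ZMod p → ℤ) (h1 : ∀ j, c j - c (j - 1) ≤ scopesD p w j) :
    scopesRes p (scopesE p w c) = scopesR₀ p w + ((∑ j : ZMod p, c j : ℤ) : ZMod p) := by
  unfold scopesRes
  have step : ∀ j : ZMod p, j * ((scopesE p w c j : ℕ) : ZMod p)
      = j * ((scopesD p w j : ℤ) : ZMod p) - (j * ((c j : ℤ) : ZMod p) - j * ((c (j-1) : ℤ) : ZMod p)) := by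
    intro j
    have : ((scopesE p w c j : ℕ) : ZMod p) = (((scopesE p w c j : ℤ)) : ZMod p) := by push_cast; ring
    rw [this, scopesE_cast p w c h1 j]; push_cast; ring
  rw [Finset.sum_congr rfl (fun j _ => step j), Finset.sum_sub_distrib, Finset.sum_sub_distrib,
    sum_j_scopesD]
  have shift : ∑ j : ZMod p, j * ((c (j-1) : ℤ) : ZMod p)
      = ∑ j : ZMod p, (j + 1) * ((c j : ℤ) : ZMod p) := by
    refine Fintype.sum_equiv (Equiv.subRight (1 : ZMod p)) _ _ (fun j => ?_)
    simp [Equiv.subRight, sub_add_cancel]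
  rw [shift]
  have : ∑ j : ZMod p, j * ((c j : ℤ) : ZMod p) - ∑ j : ZMod p, (j + 1) * ((c j : ℤ) : ZMod p)
      = - ∑ j : ZMod p, ((c j : ℤ) : ZMod p) := by
    rw [← Finset.sum_sub_distrib, ← Finset.sum_neg_distrib]
    exact Finset.sum_congr rfl (fun j _ => by ring)
  rw [this]
  push_cast
  ring

/-! ### From a composition `e` to a constrained vector -/

def scopesd (e : ZMod p → ℕ) (j : ZMod p) : ℤ := scopesD p w j - (e j : ℤ)

def scopesP (e : ZMod p → ℕ) (k : ℕ) : ℤ :=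
  ∑ x ∈ Finset.range k, scopesd p w e ((x + 1 : ℕ) : ZMod p)

lemma sum_scopesd (e : ZMod p → ℕ) (he : ∑ j : ZMod p, e j = scopesN p w) (hw : 1 ≤ w) :
    ∑ j : ZMod p, scopesd p w e j = 0 := by
  unfold scopesd
  rw [Finset.sum_sub_distrib, sum_scopesD p w hw, ← Nat.cast_sum, he]
  ring

lemma scopesP_last (e : ZMod p → ℕ) (he : ∑ j : ZMod p, e j = scopesN p w) (hw : 1 ≤ w) :
    scopesP p w e (p - 1) = - scopesd p w e 0 := by
  have hp1 : p - 1 + 1 = p := Nat.succ_pred_eq_of_pos (NeZero.pos p)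
  have h0 := sum_scopesd p w e he hw
  rw [zmod_sum_range p (scopesd p w e)] at h0
  have h0' : ∑ k ∈ Finset.range (p - 1 + 1), scopesd p w e ((k : ℕ) : ZMod p) = 0 := by
    rw [hp1]; exact h0
  rw [Finset.sum_range_succ' (fun k => scopesd p w e ((k : ℕ) : ZMod p)) (p-1)] at h0'
  unfold scopesP
  simp only [Nat.cast_zero] at h0'
  linarith [h0']

lemma sum_range_sum_range {R : Type*} [CommRing R] (g : ℕ → R) (n : ℕ) :
    ∑ k ∈ Finset.range n, ∑ x ∈ Finset.range k, g x
      = ∑ x ∈ Finset.range n, (((n : R) - 1 - (x : R)) * g x) := by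
  induction n with
  | zero => simp
  | succ n ih =>
    rw [Finset.sum_range_succ, ih, Finset.sum_range_succ]
    push_cast
    rw [← Finset.sum_add_distrib]
    rw [Finset.sum_congr rfl (fun x _ => by ring :
      ∀ x ∈ Finset.range n, ((n : R) - 1 - x) * g x + g x = ((n : R) + 1 - 1 - x) * g x)]
    ring

lemma sum_j_scopesd (e : ZMod p → ℕ) :
    ∑ j : ZMod p, j * ((scopesd p w e j : ℤ) : ZMod p)
      = scopesR₀ p w - scopesRes p e := by
  unfold scopesd scopesRes
  rw [← sum_j_scopesD p w, ← Finset.sum_sub_distrib]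
  refine Finset.sum_congr rfl (fun j _ => ?_)
  push_cast
  ring

lemma dvd_sum_scopesP (e : ZMod p → ℕ) (hres : scopesRes p e = scopesR₀ p w) :
    (p : ℤ) ∣ ∑ k ∈ Finset.range p, scopesP p w e k := by
  rw [← ZMod.intCast_zmod_eq_zero_iff_dvd]
  rw [Int.cast_sum]
  unfold scopesP
  simp only [Int.cast_sum]
  rw [sum_range_sum_range (fun x => ((scopesd p w e ((x + 1 : ℕ) : ZMod p) : ℤ) : ZMod p)) p]
  have hp0 : ((p : ℕ) : ZMod p) = 0 := ZMod.natCast_self p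
  have key : ∑ x ∈ Finset.range p,
      (((x + 1 : ℕ)) : ZMod p) * ((scopesd p w e ((x + 1 : ℕ) : ZMod p) : ℤ) : ZMod p)
      = ∑ k ∈ Finset.range p, ((k : ℕ) : ZMod p) * ((scopesd p w e ((k : ℕ) : ZMod p) : ℤ) : ZMod p) := by
    have h1 := Finset.sum_range_succ
      (fun k => ((k : ℕ) : ZMod p) * ((scopesd p w e ((k : ℕ) : ZMod p) : ℤ) : ZMod p)) p
    have h2 := Finset.sum_range_succ'
      (fun k => ((k : ℕ) : ZMod p) * ((scopesd p w e ((k : ℕ) : ZMod p) : ℤ) : ZMod p)) p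
    simp only [hp0, zero_mul, add_zero, Nat.cast_zero] at h1 h2
    rw [← h1, h2]
  have cast_sum : ∑ k ∈ Finset.range p, ((k : ℕ) : ZMod p) * ((scopesd p w e ((k : ℕ) : ZMod p) : ℤ) : ZMod p)
      = scopesR₀ p w - scopesRes p e := by
    rw [← sum_j_scopesd p w e, zmod_sum_range p (fun j => j * ((scopesd p w e j : ℤ) : ZMod p))]
  have : ∀ x ∈ Finset.range p, ((p : ZMod p) - 1 - (x : ZMod p)) * ((scopesd p w e ((x + 1 : ℕ) : ZMod p) : ℤ) : ZMod p)
      = -((((x + 1 : ℕ)) : ZMod p) * ((scopesd p w e ((x + 1 : ℕ) : ZMod p) : ℤ) : ZMod p)) := by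
    intro x _
    have : ((p : ℕ) : ZMod p) = 0 := hp0
    push_cast
    rw [this]
    ring
  rw [Finset.sum_congr rfl this, Finset.sum_neg_distrib, key, cast_sum, hres]
  ring

def scopesT (e : ZMod p → ℕ) : ℤ :=
  -(∑ k ∈ Finset.range p, scopesP p w e k) / p

def scopesC (e : ZMod p → ℕ) (i : Fin p) : ℤ := scopesT p w e + scopesP p w e i.val

lemma val_cast_succ {i : ℕ} (hi : i + 1 < p) :
    (((i + 1 : ℕ)) : ZMod p) ≠ 0 := by
  intro h
  have := ZMod.val_cast_of_lt hi
  rw [h, ZMod.val_zero] at this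
  omega

lemma sum_scopesC (e : ZMod p → ℕ) (hres : scopesRes p e = scopesR₀ p w) :
    ∑ i : Fin p, scopesC p w e i = 0 := by
  unfold scopesC
  rw [Finset.sum_add_distrib]
  have h1 : ∑ i : Fin p, scopesP p w e i.val = ∑ k ∈ Finset.range p, scopesP p w e k :=
    Fin.sum_univ_eq_sum_range (scopesP p w e) p
  have h2 : ∑ _i : Fin p, scopesT p w e = p * scopesT p w e := by
    rw [Finset.sum_const, Finset.card_univ, Fintype.card_fin]; push_cast; ring
  rw [h1, h2]
  unfold scopesT
  have hdvd := dvd_sum_scopesP p w e hres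
  have hdvd' : (p : ℤ) ∣ -(∑ k ∈ Finset.range p, scopesP p w e k) := hdvd.neg_right
  rw [Int.mul_ediv_cancel' hdvd']
  ring

lemma scopesC_step (e : ZMod p → ℕ) {i : ℕ} (hi : i + 1 < p) :
    scopesC p w e ⟨i + 1, hi⟩ - scopesC p w e ⟨i, Nat.lt_of_succ_lt hi⟩
      = scopesd p w e ((i + 1 : ℕ) : ZMod p) := by
  unfold scopesC scopesP
  rw [Finset.sum_range_succ]
  ring

lemma scopesC_step_le (e : ZMod p → ℕ) {i : ℕ} (hi : i + 1 < p) :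
    scopesC p w e ⟨i + 1, hi⟩ - scopesC p w e ⟨i, Nat.lt_of_succ_lt hi⟩ ≤ (w : ℤ) - 1 := by
  rw [scopesC_step p w e hi]
  unfold scopesd scopesD
  rw [if_neg (val_cast_succ p hi)]
  have : (0 : ℤ) ≤ (e ((i + 1 : ℕ) : ZMod p) : ℤ) := Int.natCast_nonneg _
  linarith

lemma scopesC_wrap (e : ZMod p → ℕ) (he : ∑ j : ZMod p, e j = scopesN p w) (hw : 1 ≤ w)
    (h0 : 0 < p) :
    scopesC p w e ⟨0, h0⟩ - scopesC p w e ⟨p - 1, Nat.sub_lt h0 Nat.one_pos⟩ ≤ (w : ℤ) := by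
  unfold scopesC
  have hP0 : scopesP p w e 0 = 0 := by simp [scopesP]
  rw [hP0, scopesP_last p w e he hw]
  unfold scopesd scopesD
  rw [if_pos rfl]
  have : (0 : ℤ) ≤ (e (0 : ZMod p) : ℤ) := Int.natCast_nonneg _
  linarith

lemma succ_rep {j : ZMod p} (hj : j ≠ 0) :
    ∃ i : ℕ, ∃ hi : i + 1 < p, j = ((i + 1 : ℕ) : ZMod p) ∧ (j - 1) = ((i : ℕ) : ZMod p)
      ∧ ((i : ℕ) : ZMod p).val = i := by
  have hv : j.val ≠ 0 := fun h => hj ((ZMod.val_eq_zero j).mp h)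
  have hvlt : j.val < p := j.val_lt
  refine ⟨j.val - 1, by omega, ?_, ?_, ZMod.val_cast_of_lt (by omega)⟩
  · conv_lhs => rw [← ZMod.natCast_rightInverse j]
    congr 1
    omega
  · conv_lhs => rw [← ZMod.natCast_rightInverse j]
    have : j.val = (j.val - 1) + 1 := by omega
    rw [this]
    push_cast
    ring

lemma neg_one_val : ((0 : ZMod p) - 1) = ((p - 1 : ℕ) : ZMod p) ∧ ((p - 1 : ℕ) : ZMod p).val = p - 1 := by
  have h1 : 1 ≤ p := NeZero.one_le
  constructor
  · have : ((p : ℕ) : ZMod p) = 0 := ZMod.natCast_self p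
    rw [Nat.cast_sub h1, this]
    push_cast
    ring
  · exact ZMod.val_cast_of_lt (by omega)

def scopesCtoZ (c : Fin p → ℤ) (j : ZMod p) : ℤ := c ⟨j.val, j.val_lt⟩

lemma scopesCtoZ_constraints (c : Fin p → ℤ) (h0 : 0 < p) (hsub : p - 1 < p)
    (hstep : ∀ (i : ℕ) (hi : i + 1 < p),
      c ⟨i + 1, hi⟩ - c ⟨i, Nat.lt_of_succ_lt hi⟩ ≤ (w : ℤ) - 1)
    (hwrap : c ⟨0, h0⟩ - c ⟨p - 1, hsub⟩ ≤ (w : ℤ)) :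
    ∀ j : ZMod p, scopesCtoZ p c j - scopesCtoZ p c (j - 1) ≤ scopesD p w j := by
  intro j
  by_cases hj : j = 0
  · subst hj
    rw [scopesD, if_pos rfl]
    unfold scopesCtoZ
    obtain ⟨hcast, hval⟩ := neg_one_val p
    rw [hcast]
    have e0 : (⟨(0 : ZMod p).val, (0 : ZMod p).val_lt⟩ : Fin p) = ⟨0, h0⟩ := by
      ext; exact ZMod.val_zero
    have e1 : (⟨((p - 1 : ℕ) : ZMod p).val, ((p - 1 : ℕ) : ZMod p).val_lt⟩ : Fin p)
        = ⟨p - 1, hsub⟩ := by ext; exact hval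
    rw [e0, e1]
    exact hwrap
  · rw [scopesD, if_neg hj]
    obtain ⟨i, hi, hji, hji1, hival⟩ := succ_rep p hj
    unfold scopesCtoZ
    have e0 : (⟨j.val, j.val_lt⟩ : Fin p) = ⟨i + 1, hi⟩ := by
      ext
      simp only []
      rw [hji, ZMod.val_cast_of_lt hi]
    have e1 : (⟨(j - 1).val, (j - 1).val_lt⟩ : Fin p) = ⟨i, Nat.lt_of_succ_lt hi⟩ := by
      ext
      simp only []
      rw [hji1, hival]
    rw [e0, e1]
    exact hstep i hi

lemma scopesCtoZ_sum (c : Fin p → ℤ) :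
    ∑ j : ZMod p, scopesCtoZ p c j = ∑ i : Fin p, c i := by
  refine (Fintype.sum_equiv (finZModEquiv p) _ _ (fun i => ?_)).symm
  unfold scopesCtoZ finZModEquiv
  simp only [Equiv.coe_fn_mk]
  congr 1
  ext
  simp [ZMod.val_cast_of_lt i.isLt]

lemma scopes_left_inv (c : Fin p → ℤ)
    (h1 : ∀ j : ZMod p, scopesCtoZ p c j - scopesCtoZ p c (j - 1) ≤ scopesD p w j)
    (hsum : ∑ i : Fin p, c i = 0) :
    scopesC p w (scopesE p w (scopesCtoZ p c)) = c := by
  set c' := scopesCtoZ p c with hc'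
  set e := scopesE p w c' with he
  have hd : ∀ j : ZMod p, scopesd p w e j = c' j - c' (j - 1) := by
    intro j
    rw [scopesd, he, scopesE_cast p w c' h1 j]
    ring
  have hPk : ∀ k : ℕ, scopesP p w e k = c' ((k : ℕ) : ZMod p) - c' 0 := by
    intro k
    induction k with
    | zero => simp [scopesP]
    | succ k ih =>
      rw [scopesP, Finset.sum_range_succ, ← scopesP, ih, hd]
      have : (((k + 1 : ℕ)) : ZMod p) - 1 = ((k : ℕ) : ZMod p) := by push_cast; ring
      rw [this]
      ring
  have hzero : ∑ j : ZMod p, c' j = 0 := by rw [hc', scopesCtoZ_sum, hsum]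
  have hS : ∑ k ∈ Finset.range p, scopesP p w e k = -((p : ℤ) * c' 0) := by
    rw [Finset.sum_congr rfl (fun k _ => hPk k), Finset.sum_sub_distrib]
    rw [← zmod_sum_range p c', hzero]
    simp
  have ht : scopesT p w e = c' 0 := by
    rw [scopesT, hS, neg_neg]
    exact Int.mul_ediv_cancel_left _ (by exact_mod_cast (NeZero.ne p))
  funext i
  rw [scopesC, ht, hPk]
  have : c' ((i.val : ℕ) : ZMod p) = c i := by
    rw [hc', scopesCtoZ]
    congr 1
    ext
    simp [ZMod.val_cast_of_lt i.isLt]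
  rw [this]
  ring

lemma scopes_right_inv (e : ZMod p → ℕ) (he : ∑ j : ZMod p, e j = scopesN p w) (hw : 1 ≤ w) :
    scopesE p w (scopesCtoZ p (scopesC p w e)) = e := by
  set c' := scopesCtoZ p (scopesC p w e) with hc'
  have hc'val : ∀ j : ZMod p, c' j = scopesT p w e + scopesP p w e j.val := fun j => rfl
  have key : ∀ j : ZMod p, c' j - c' (j - 1) = scopesd p w e j := by
    intro j
    by_cases hj : j = 0
    · subst hj
      obtain ⟨hcast, hval⟩ := neg_one_val p
      rw [hc'val, hc'val, hcast, hval, ZMod.val_zero]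
      have hP0 : scopesP p w e 0 = 0 := by simp [scopesP]
      rw [hP0, scopesP_last p w e he hw]
      ring
    · obtain ⟨i, hi, hji, hji1, hival⟩ := succ_rep p hj
      rw [hc'val, hc'val, hji1, hival, hji, ZMod.val_cast_of_lt hi]
      rw [scopesP, Finset.sum_range_succ, ← scopesP]
      ring
  funext j
  rw [scopesE, key, scopesd]
  simp

def scopesEquivTA (hw : 1 ≤ w) (h0 : 0 < p) (hsub : p - 1 < p) :
    {c : Fin p → ℤ //
        (∀ (i : ℕ) (hi : i + 1 < p),
            c ⟨i + 1, hi⟩ - c ⟨i, Nat.lt_of_succ_lt hi⟩ ≤ (w : ℤ) - 1)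
        ∧ c ⟨0, h0⟩ - c ⟨p - 1, hsub⟩ ≤ (w : ℤ)
        ∧ ∑ i, c i = 0}
    ≃ {e : ZMod p → ℕ // ∑ j : ZMod p, e j = scopesN p w ∧ scopesRes p e = scopesR₀ p w} where
  toFun c := ⟨scopesE p w (scopesCtoZ p c.1), by
    have h1 := scopesCtoZ_constraints p w c.1 h0 hsub c.2.1 c.2.2.1
    refine ⟨sum_scopesE p w _ h1 hw, ?_⟩
    rw [res_scopesE p w _ h1, scopesCtoZ_sum, c.2.2.2]
    simp⟩
  invFun e := ⟨scopesC p w e.1,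
    fun i hi => scopesC_step_le p w e.1 hi,
    scopesC_wrap p w e.1 e.2.1 hw h0,
    sum_scopesC p w e.1 e.2.2⟩
  left_inv c := by
    ext : 1
    exact scopes_left_inv p w c.1
      (scopesCtoZ_constraints p w c.1 h0 hsub c.2.1 c.2.2.1) c.2.2.2
  right_inv e := by
    ext : 1
    exact scopes_right_inv p w e.1 e.2.1 hw

/-! ### The shift equivalence -/

def scopesShift (k : ZMod p) (e : ZMod p → ℕ) : ZMod p → ℕ := fun j => e (j + k)

lemma sum_scopesShift (k : ZMod p) (e : ZMod p → ℕ) :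
    ∑ j : ZMod p, scopesShift p k e j = ∑ j : ZMod p, e j :=
  Fintype.sum_equiv (Equiv.addRight k) _ _ (fun _ => rfl)

lemma res_scopesShift (hw : 1 ≤ w) (k : ZMod p) (e : ZMod p → ℕ)
    (he : ∑ j : ZMod p, e j = scopesN p w) :
    scopesRes p (scopesShift p k e) = scopesRes p e - k := by
  unfold scopesRes scopesShift
  have h1 : ∑ j : ZMod p, j * ((e (j + k) : ℕ) : ZMod p)
      = ∑ m : ZMod p, (m - k) * ((e m : ℕ) : ZMod p) := by
    refine (Fintype.sum_equiv (Equiv.subRight k) _ _ (fun m => ?_)).symm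
    simp [Equiv.subRight, sub_add_cancel]
  rw [h1]
  have h2 : ∑ m : ZMod p, ((e m : ℕ) : ZMod p) = 1 := by
    rw [← Nat.cast_sum, he, scopesN]
    push_cast [ZMod.natCast_self]
    ring
  calc ∑ m : ZMod p, (m - k) * ((e m : ℕ) : ZMod p)
      = ∑ m : ZMod p, (m * ((e m : ℕ) : ZMod p) - k * ((e m : ℕ) : ZMod p)) := by
        exact Finset.sum_congr rfl (fun m _ => by ring)
    _ = ∑ m : ZMod p, m * ((e m : ℕ) : ZMod p) - k * ∑ m : ZMod p, ((e m : ℕ) : ZMod p) := by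
        rw [Finset.sum_sub_distrib, Finset.mul_sum]
    _ = _ := by rw [h2]; ring

def scopesEquivComp (hw : 1 ≤ w) :
    {e : ZMod p → ℕ // ∑ j : ZMod p, e j = scopesN p w}
    ≃ {e : ZMod p → ℕ // ∑ j : ZMod p, e j = scopesN p w ∧ scopesRes p e = scopesR₀ p w}
      × ZMod p where
  toFun e := (⟨scopesShift p (scopesRes p e.1 - scopesR₀ p w) e.1, by
      rw [sum_scopesShift]
      exact ⟨e.2, by rw [res_scopesShift p w hw _ _ e.2]; ring⟩⟩,
    scopesRes p e.1 - scopesR₀ p w)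
  invFun ak := ⟨scopesShift p (-ak.2) ak.1.1, by rw [sum_scopesShift]; exact ak.1.2.1⟩
  left_inv e := by
    ext j : 2
    show e.1 (j + -(scopesRes p e.1 - scopesR₀ p w) + (scopesRes p e.1 - scopesR₀ p w)) = e.1 j
    congr 1
    ring
  right_inv ak := by
    obtain ⟨⟨a, ha, hres⟩, k⟩ := ak
    have hk : scopesRes p (scopesShift p (-k) a) - scopesR₀ p w = k := by
      rw [res_scopesShift p w hw _ _ ha, hres]
      ring
    refine Prod.ext ?_ hk
    ext j : 2
    show a (j + (scopesRes p (scopesShift p (-k) a) - scopesR₀ p w) + -k) = a j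
    rw [hk]
    congr 1
    ring

lemma scopes_card_comp (hw : 1 ≤ w) :
    Nat.card {e : ZMod p → ℕ // ∑ j : ZMod p, e j = scopesN p w}
      = (p * w).choose (p - 1) := by
  rw [Nat.card_congr (Sym.equivNatSumOfFintype (ZMod p) (scopesN p w)).symm,
    Nat.card_eq_fintype_card, Sym.card_sym_eq_choose, ZMod.card]
  obtain ⟨v, rfl⟩ : ∃ v, w = v + 1 := ⟨w - 1, by omega⟩
  have hN : scopesN p (v + 1) = p * v + 1 := by
    unfold scopesN; rw [Nat.add_sub_cancel]
  have hpw : p * (v + 1) = p * v + p := Nat.mul_succ p v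
  have h1 : p + scopesN p (v + 1) - 1 = p * (v + 1) := by
    rw [hN, hpw]; omega
  rw [h1]
  have h2 : scopesN p (v + 1) = p * (v + 1) - (p - 1) := by
    rw [hN, hpw]
    have := NeZero.pos p
    omega
  rw [h2]
  exact Nat.choose_symm (by rw [hpw]; have := NeZero.pos p; omega)

end Scopes

/-- Let `p` be prime and `w ≥ 1`. The number of vectors
`(c_0, …, c_{p-1}) ∈ ℤ^p` with `c_j - c_{j-1} ≤ w - 1` for `1 ≤ j ≤ p-1`,
`c_0 - c_{p-1} ≤ w`, and `c_0 + ⋯ + c_{p-1} = 0` equals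
`(1/p) * C(p*w, p-1)`. -/
theorem number_of_scopes_families (p w : ℕ) (hp : p.Prime) (hw : 1 ≤ w) :
    p * Nat.card {c : Fin p → ℤ //
        (∀ (i : ℕ) (hi : i + 1 < p),
            c ⟨i + 1, hi⟩ - c ⟨i, Nat.lt_of_succ_lt hi⟩ ≤ (w : ℤ) - 1)
        ∧ c ⟨0, hp.pos⟩ - c ⟨p - 1, Nat.sub_lt hp.pos Nat.one_pos⟩ ≤ (w : ℤ)
        ∧ ∑ i, c i = 0}
      = (p * w).choose (p - 1) := by
  haveI : NeZero p := ⟨hp.pos.ne'⟩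
  rw [Nat.card_congr (scopesEquivTA p w hw hp.pos (Nat.sub_lt hp.pos Nat.one_pos))]
  have hcomp : Nat.card {e : ZMod p → ℕ // ∑ j : ZMod p, e j = scopesN p w}
      = Nat.card {e : ZMod p → ℕ //
          ∑ j : ZMod p, e j = scopesN p w ∧ scopesRes p e = scopesR₀ p w} * p := by
    have hz : Nat.card (ZMod p) = p := by rw [Nat.card_eq_fintype_card, ZMod.card]
    rw [Nat.card_congr (scopesEquivComp p w hw), Nat.card_prod, hz]
  rw [Nat.mul_comm, ← hcomp, scopes_card_comp p w hw]
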